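/- Let p be an odd prime and m, n₁ positive integers, and set n = 2^m·p^{n₁}. Then the unit graph G(Z_n) is connected and its diameter is at most 3; that is, any two distinct vertices of G(Z_n) are joined by a path of length at most 3. -/

import Mathlib

/-- The unit graph of `ZMod m`: distinct vertices `x, y` are adjacent iff `x + y` is a unit. -/
def unitGraph (m : ℕ) : SimpleGraph (ZMod m) where
  Adj x y := x ≠ y ∧ IsUnit (x + y)
  symm := by
    constructor
    intro x y h
    exact ⟨h.1.symm, by rw [add_comm]; exact h.2⟩
  loopless := by
    constructor
    intro x h
    exact h.1 rfl

/-- pigeonhole among three pairwise distinct values avoiding two -/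
lemma unitGraph_pick3 {α : Type*} (a b c u v : α) (hab : a ≠ b) (hac : a ≠ c) (hbc : b ≠ c) :
    ∃ w, (w = a ∨ w = b ∨ w = c) ∧ w ≠ u ∧ w ≠ v := by
  by_cases hau : a = u
  · by_cases hbv : b = v
    · exact ⟨c, Or.inr (Or.inr rfl), by rw [← hau]; exact hac.symm, by rw [← hbv]; exact hbc.symm⟩
    · exact ⟨b, Or.inr (Or.inl rfl), by rw [← hau]; exact hab.symm, hbv⟩
  · by_cases hav : a = v
    · by_cases hbu : b = u
      · exact ⟨c, Or.inr (Or.inr rfl), by rw [← hbu]; exact hbc.symm, by rw [← hav]; exact hac.symm⟩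
      · exact ⟨b, Or.inr (Or.inl rfl), hbu, by rw [← hav]; exact hab.symm⟩
    · exact ⟨a, Or.inl rfl, hau, hav⟩

/-- there is an odd natural whose residue mod an odd prime avoids two given values -/
lemma unitGraph_exists_odd_avoid (p : ℕ) (hp : p.Prime) (hodd : Odd p) (u v : ZMod p) :
    ∃ k : ℕ, Odd k ∧ (k : ZMod p) ≠ u ∧ (k : ZMod p) ≠ v := by
  have hpne2 : p ≠ 2 := by
    intro h; rw [h, Nat.odd_iff] at hodd; norm_num at hodd
  have hd2 : ¬ p ∣ 2 := fun h =>
    hpne2 ((Nat.prime_dvd_prime_iff_eq hp Nat.prime_two).mp h)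
  have hd4 : ¬ p ∣ 4 := fun h => by
    have : p ∣ 2 := hp.dvd_of_dvd_pow (n := 2) (m := 2) (by norm_num at h ⊢; exact h)
    exact hd2 this
  have h2z : ((2 : ℕ) : ZMod p) ≠ 0 := by
    rw [Ne, ZMod.natCast_eq_zero_iff]; exact hd2
  have h4z : ((4 : ℕ) : ZMod p) ≠ 0 := by
    rw [Ne, ZMod.natCast_eq_zero_iff]; exact hd4
  have h13 : ((1 : ℕ) : ZMod p) ≠ ((3 : ℕ) : ZMod p) := by
    intro h; apply h2z; push_cast at h ⊢; linear_combination -h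
  have h15 : ((1 : ℕ) : ZMod p) ≠ ((5 : ℕ) : ZMod p) := by
    intro h; apply h4z; push_cast at h ⊢; linear_combination -h
  have h35 : ((3 : ℕ) : ZMod p) ≠ ((5 : ℕ) : ZMod p) := by
    intro h; apply h2z; push_cast at h ⊢; linear_combination -h
  obtain ⟨w, hw, hwu, hwv⟩ := unitGraph_pick3 ((1 : ℕ) : ZMod p) ((3 : ℕ) : ZMod p)
    ((5 : ℕ) : ZMod p) u v h13 h15 h35
  rcases hw with h | h | h
  · exact ⟨1, ⟨0, rfl⟩, h ▸ hwu, h ▸ hwv⟩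
  · exact ⟨3, ⟨1, rfl⟩, h ▸ hwu, h ▸ hwv⟩
  · exact ⟨5, ⟨2, rfl⟩, h ▸ hwu, h ▸ hwv⟩

theorem unitGraph_twoPowTimesOddPrimePow_connected_diam (p m n₁ : ℕ)
    (hp : p.Prime) (hodd : Odd p) (hm : 0 < m) (hn₁ : 0 < n₁) :
    (unitGraph (2 ^ m * p ^ n₁)).Connected ∧
    ∀ x y : ZMod (2 ^ m * p ^ n₁), x ≠ y →
      (unitGraph (2 ^ m * p ^ n₁)).dist x y ≤ 3 := by
  have hp0 : 0 < p := hp.pos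
  haveI : NeZero (2 ^ m * p ^ n₁) := ⟨by positivity⟩
  have h2 : (2 : ℕ) ∣ 2 ^ m * p ^ n₁ :=
    dvd_mul_of_dvd_left (dvd_pow_self 2 hm.ne') _
  have hpd : p ∣ 2 ^ m * p ^ n₁ :=
    dvd_mul_of_dvd_right (dvd_pow_self p hn₁.ne') _
  set n : ℕ := 2 ^ m * p ^ n₁ with hn
  set f : ZMod n →+* ZMod 2 := ZMod.castHom h2 (ZMod 2) with hf
  set g : ZMod n →+* ZMod p := ZMod.castHom hpd (ZMod p) with hg
  -- the unit criterion
  have crit : ∀ z : ZMod n, IsUnit z ↔ f z ≠ 0 ∧ g z ≠ 0 := by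
    intro z
    have hz : ((z.val : ℕ) : ZMod n) = z := ZMod.natCast_rightInverse z
    rw [← hz, ZMod.isUnit_iff_coprime, map_natCast, map_natCast,
      Ne, Ne, ZMod.natCast_eq_zero_iff, ZMod.natCast_eq_zero_iff]
    show z.val.Coprime (2 ^ m * p ^ n₁) ↔ _
    rw [Nat.coprime_mul_iff_right, Nat.coprime_pow_right_iff hm,
      Nat.coprime_pow_right_iff hn₁]
    exact and_congr (Nat.coprime_comm.trans Nat.prime_two.coprime_iff_not_dvd)
      (Nat.coprime_comm.trans hp.coprime_iff_not_dvd)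
  have hodd2 : ∀ k : ℕ, Odd k → ((k : ℕ) : ZMod 2) = 1 := by
    intro k hk
    rw [← ZMod.natCast_mod k 2, Nat.odd_iff.mp hk]; norm_num
  -- units give adjacency
  have h2nu : ¬ IsUnit (2 : ZMod n) := by
    intro h
    have := ((crit 2).mp h).1
    apply this
    have : f (2 : ZMod n) = (2 : ZMod 2) := map_ofNat f 2
    rw [this]; decide
  have nesum : ∀ x y : ZMod n, IsUnit (x + y) → x ≠ y := by
    intro x y h hxy
    rw [hxy, ← two_mul] at h
    exact h2nu (isUnit_of_mul_isUnit_left h)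
  -- walks of length at most 3 between any two vertices
  have key : ∀ x y : ZMod n, ∃ w : (unitGraph n).Walk x y, w.length ≤ 3 := by
    intro x y
    by_cases hfe : f (x + y) = 0
    · -- even case : path of length 2
      obtain ⟨k, hk, hk0, hkv⟩ := unitGraph_exists_odd_avoid p hp hodd 0 (g x - g y)
      set s : ZMod n := (k : ZMod n) - x with hs
      have hxs : x + s = (k : ZMod n) := by rw [hs]; ring
      have hu1 : IsUnit (x + s) := by
        rw [hxs, crit, map_natCast, map_natCast, hodd2 k hk]
        exact ⟨one_ne_zero, hk0⟩
      have hu2 : IsUnit (s + y) := by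
        rw [crit]
        constructor
        · have : f (s + y) = 1 - f x + f y := by
            rw [hs, map_add, map_sub, map_natCast, hodd2 k hk]
          rw [this]
          have h0 : f x + f y = 0 := by rw [← map_add]; exact hfe
          revert h0
          generalize f x = a; generalize f y = b
          revert a b; decide
        · have : g (s + y) = (k : ZMod p) - g x + g y := by
            rw [hs, map_add, map_sub, map_natCast]
          rw [this]
          intro h0
          apply hkv
          linear_combination h0
      exact ⟨SimpleGraph.Walk.cons ⟨nesum x s hu1, hu1⟩
        (SimpleGraph.Walk.cons ⟨nesum s y hu2, hu2⟩ SimpleGraph.Walk.nil), Nat.le_of_ble_eq_true rfl⟩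
    · -- odd case : path of length 3
      obtain ⟨k, hk, hk0, -⟩ := unitGraph_exists_odd_avoid p hp hodd 0 0
      obtain ⟨l, hl, hl0, hlv⟩ := unitGraph_exists_odd_avoid p hp hodd 0
        (g x + g y - (k : ZMod p))
      set s : ZMod n := (k : ZMod n) - x with hs
      set t : ZMod n := (l : ZMod n) - y with ht
      have hu1 : IsUnit (x + s) := by
        have hxs : x + s = (k : ZMod n) := by rw [hs]; ring
        rw [hxs, crit, map_natCast, map_natCast, hodd2 k hk]
        exact ⟨one_ne_zero, hk0⟩
      have hu3 : IsUnit (t + y) := by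
        have hty : t + y = (l : ZMod n) := by rw [ht]; ring
        rw [hty, crit, map_natCast, map_natCast, hodd2 l hl]
        exact ⟨one_ne_zero, hl0⟩
      have hu2 : IsUnit (s + t) := by
        rw [crit]
        constructor
        · have : f (s + t) = 1 - f x + (1 - f y) := by
            rw [hs, ht, map_add, map_sub, map_sub, map_natCast, map_natCast,
              hodd2 k hk, hodd2 l hl]
          rw [this]
          have h0 : f x + f y ≠ 0 := by rw [← map_add]; exact hfe
          revert h0
          generalize f x = a; generalize f y = b
          revert a b; decide
        · have : g (s + t) = (k : ZMod p) - g x + ((l : ZMod p) - g y) := by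
            rw [hs, ht, map_add, map_sub, map_sub, map_natCast, map_natCast]
          rw [this]
          intro h0
          apply hlv
          linear_combination h0
      exact ⟨SimpleGraph.Walk.cons ⟨nesum x s hu1, hu1⟩
        (SimpleGraph.Walk.cons ⟨nesum s t hu2, hu2⟩
          (SimpleGraph.Walk.cons ⟨nesum t y hu3, hu3⟩ SimpleGraph.Walk.nil)), Nat.le_of_ble_eq_true rfl⟩
  constructor
  · haveI : Nonempty (ZMod n) := ⟨0⟩
    exact SimpleGraph.Connected.mk (fun x y => ⟨(key x y).choose⟩)
  · intro x y _
    obtain ⟨w, hw⟩ := key x y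
    exact le_trans (SimpleGraph.dist_le w) hw
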